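/- Let n be a natural number and A an n×n real matrix. Define φ : ℝ → Matrix (Fin n) (Fin n) ℝ by the series φ(z) = Σ_{k=0}^∞ ((−1)^k · z^(2k+1)/(2k+1)!) · A^(2k) (which converges for every z). Then φ(0) = 0, φ is differentiable with φ'(0) = 1 (the identity matrix), and for every z ∈ ℝ, φ''(z) = −(A·A)·φ(z). -/

import Mathlib

attribute [local instance] Matrix.normedAddCommGroup Matrix.normedSpace

open scoped BigOperators

section Aux

set_option linter.unusedSectionVars false

variable {E : Type*} [NormedAddCommGroup E] [NormedSpace ℝ E] [CompleteSpace E]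

/-- Growth condition on coefficients: `‖c m‖ ≤ C * D^m / m!`. -/
def GoodCoeff (c : ℕ → E) : Prop :=
  ∃ C D : ℝ, 0 ≤ C ∧ 1 ≤ D ∧ ∀ m, ‖c m‖ * m.factorial ≤ C * D ^ m

/-- The formal power series with coefficients `c`. -/
noncomputable def pser (c : ℕ → E) : FormalMultilinearSeries ℝ ℝ E :=
  fun m => ContinuousMultilinearMap.mkPiRing ℝ (Fin m) (c m)

/-- The sum of the power series with coefficients `c`. -/
noncomputable def psum (c : ℕ → E) (z : ℝ) : E := ∑' m : ℕ, z ^ m • c m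

/-- Coefficients of the termwise derivative. -/
def shiftCoeff (c : ℕ → E) : ℕ → E := fun m => (m + 1) • c (m + 1)

lemma goodCoeff_shift {c : ℕ → E} (h : GoodCoeff c) : GoodCoeff (shiftCoeff c) := by
  obtain ⟨C, D, hC, hD, hb⟩ := h
  refine ⟨C * D, D, by positivity, hD, fun m => ?_⟩
  have h1 : ‖shiftCoeff c m‖ = ((m : ℝ) + 1) * ‖c (m + 1)‖ := by
    rw [shiftCoeff, ← Nat.cast_smul_eq_nsmul ℝ, norm_smul]
    push_cast
    rw [Real.norm_eq_abs, abs_of_nonneg (by positivity)]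
  calc ‖shiftCoeff c m‖ * m.factorial = ‖c (m + 1)‖ * ((m + 1).factorial) := by
        rw [h1, Nat.factorial_succ]; push_cast; ring
    _ ≤ C * D ^ (m + 1) := hb (m + 1)
    _ = C * D * D ^ m := by ring

lemma pser_summable_norm {c : ℕ → E} (h : GoodCoeff c) (r : NNReal) :
    Summable fun m => ‖pser c m‖ * (r : ℝ) ^ m := by
  obtain ⟨C, D, hC, hD, hb⟩ := h
  refine Summable.of_nonneg_of_le (fun m => by positivity) (fun m => ?_)
    ((Real.summable_pow_div_factorial (D * r)).mul_left C)
  have hnorm : ‖pser c m‖ = ‖c m‖ := ContinuousMultilinearMap.norm_mkPiRing _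
  have hfac : (0 : ℝ) < m.factorial := by exact_mod_cast m.factorial_pos
  rw [hnorm, ← mul_div_assoc, le_div_iff₀ hfac, mul_pow]
  calc ‖c m‖ * (r : ℝ) ^ m * m.factorial = (‖c m‖ * m.factorial) * (r : ℝ) ^ m := by ring
    _ ≤ (C * D ^ m) * (r : ℝ) ^ m :=
        mul_le_mul_of_nonneg_right (hb m) (by positivity)
    _ = C * (D ^ m * (r : ℝ) ^ m) := by ring

lemma hasFPower {c : ℕ → E} (h : GoodCoeff c) :
    HasFPowerSeriesOnBall (psum c) (pser c) 0 ⊤ := by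
  have hr : (pser c).radius = ⊤ :=
    (pser c).radius_eq_top_of_summable_norm (pser_summable_norm h)
  have hsum : psum c = (pser c).sum := by
    funext z
    simp [psum, FormalMultilinearSeries.sum, pser, Finset.prod_const]
  have := (pser c).hasFPowerSeriesOnBall (by rw [hr]; exact ENNReal.zero_lt_top)
  rw [hr] at this
  rwa [hsum]

lemma hasSum_psum {c : ℕ → E} (h : GoodCoeff c) (z : ℝ) :
    HasSum (fun m => z ^ m • c m) (psum c z) := by
  have H := (hasFPower h).hasSum (y := z) (by simp)
  rw [zero_add] at H
  have : (fun m => pser c m fun _ => z) = fun m => z ^ m • c m := by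
    funext m; simp [pser, Finset.prod_const]
  rwa [this] at H

lemma diff_psum {c : ℕ → E} (h : GoodCoeff c) : Differentiable ℝ (psum c) := fun z =>
  ((hasFPower h).analyticAt_of_mem (by simp)).differentiableAt

lemma hasSum_deriv_psum {c : ℕ → E} (h : GoodCoeff c) (z : ℝ) :
    HasSum (fun m => z ^ m • shiftCoeff c m) (deriv (psum c) z) := by
  have hb := hasFPower h
  rcases eq_or_ne z 0 with rfl | hz0
  · have hd : deriv (psum c) 0 = (pser c).coeff 1 := hb.hasFPowerSeriesAt.deriv
    have hc1 : (pser c).coeff 1 = c 1 := by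
      simp [FormalMultilinearSeries.coeff, pser]
    rw [hd, hc1]
    have h0 : ∀ m, m ≠ 0 → ((0 : ℝ)) ^ m • shiftCoeff c m = 0 := fun m hm => by
      rw [zero_pow hm, zero_smul]
    have := hasSum_single (f := fun m => (0 : ℝ) ^ m • shiftCoeff c m) 0 h0
    simpa [shiftCoeff] using this
  · have hs : HasSum (fun m => (pser c).derivSeries m fun _ => z)
        (fderiv ℝ (psum c) (0 + z)) := hb.fderiv.hasSum (by simp)
    rw [zero_add] at hs
    have hs2 := (ContinuousLinearMap.apply ℝ E (1 : ℝ)).hasSum hs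
    have heq : (fun m => (ContinuousLinearMap.apply ℝ E (1 : ℝ))
        ((pser c).derivSeries m fun _ => z)) = fun m => z ^ m • shiftCoeff c m := by
      funext m
      have h1 : ((pser c).derivSeries m fun _ => z) z
          = z • ((pser c).derivSeries m fun _ => z) 1 := by
        have := ((pser c).derivSeries m fun _ => z).map_smul z (1 : ℝ)
        simpa using this
      have h2 := FormalMultilinearSeries.derivSeries_apply_diag (pser c) m z
      have h3 : (pser c) (m + 1) (fun _ => z) = z ^ (m + 1) • c (m + 1) := by
        simp [pser, Finset.prod_const]
      have key : z • ((pser c).derivSeries m fun _ => z) 1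
          = z • (z ^ m • shiftCoeff c m) := by
        rw [← h1, h2, h3]
        simp only [shiftCoeff]
        rw [← Nat.cast_smul_eq_nsmul ℝ, ← Nat.cast_smul_eq_nsmul ℝ]
        simp only [smul_smul]
        congr 1
        push_cast
        ring
      have := smul_right_injective E hz0 key
      simpa using this
    rw [heq] at hs2
    have : (ContinuousLinearMap.apply ℝ E (1 : ℝ)) (fderiv ℝ (psum c) z)
        = deriv (psum c) z := rfl
    rwa [this] at hs2

lemma deriv_psum {c : ℕ → E} (h : GoodCoeff c) :
    deriv (psum c) = psum (shiftCoeff c) := by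
  funext z
  exact ((hasSum_deriv_psum h z).tsum_eq).symm

end Aux

/-- Coefficients of the power series of `phiMat`. -/
noncomputable def sinCoeff {n : ℕ} (A : Matrix (Fin n) (Fin n) ℝ) :
    ℕ → Matrix (Fin n) (Fin n) ℝ := fun m =>
  if Odd m then (((-1 : ℝ) ^ (m / 2)) / (m.factorial : ℝ)) • A ^ (m - 1) else 0

lemma matrix_norm_mul_le {n : ℕ} (B C : Matrix (Fin n) (Fin n) ℝ) :
    ‖B * C‖ ≤ n * ‖B‖ * ‖C‖ := by
  rw [Matrix.norm_le_iff (by positivity)]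
  intro i j
  rw [Matrix.mul_apply]
  calc ‖∑ k, B i k * C k j‖ ≤ ∑ k, ‖B i k * C k j‖ := norm_sum_le _ _
    _ ≤ ∑ _k : Fin n, ‖B‖ * ‖C‖ := Finset.sum_le_sum fun k _ => by
        rw [norm_mul]
        exact mul_le_mul (Matrix.norm_entry_le_entrywise_sup_norm _)
          (Matrix.norm_entry_le_entrywise_sup_norm _) (norm_nonneg _) (norm_nonneg _)
    _ = n * ‖B‖ * ‖C‖ := by simp [mul_assoc]

lemma matrix_pow_norm_le {n : ℕ} (A : Matrix (Fin n) (Fin n) ℝ) (k : ℕ) :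
    ‖A ^ k‖ ≤ ((n : ℝ) * ‖A‖ + 1) ^ k := by
  set D : ℝ := (n : ℝ) * ‖A‖ + 1 with hD
  have hD0 : (0 : ℝ) ≤ D := by positivity
  induction k with
  | zero =>
    rw [pow_zero, pow_zero]
    rw [Matrix.norm_le_iff zero_le_one]
    intro i j
    rw [Matrix.one_apply]
    split <;> simp
  | succ k ih =>
    calc ‖A ^ (k + 1)‖ = ‖A ^ k * A‖ := by rw [pow_succ]
      _ ≤ n * ‖A ^ k‖ * ‖A‖ := matrix_norm_mul_le _ _
      _ ≤ n * D ^ k * ‖A‖ :=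
          mul_le_mul_of_nonneg_right
            (mul_le_mul_of_nonneg_left ih (by positivity)) (norm_nonneg A)
      _ ≤ D ^ k * D := by
          have h2 : (n : ℝ) * ‖A‖ * D ^ k ≤ D * D ^ k :=
            mul_le_mul_of_nonneg_right (by rw [hD]; linarith) (pow_nonneg hD0 k)
          linarith [h2]
      _ = D ^ (k + 1) := by rw [pow_succ]

lemma goodCoeff_sinCoeff {n : ℕ} (A : Matrix (Fin n) (Fin n) ℝ) :
    GoodCoeff (sinCoeff A) := by
  set D : ℝ := (n : ℝ) * ‖A‖ + 1 with hD
  have hD1 : (1 : ℝ) ≤ D := le_add_of_nonneg_left (by positivity)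
  refine ⟨1, D, zero_le_one, hD1, fun m => ?_⟩
  by_cases hm : Odd m
  · rw [sinCoeff, if_pos hm, norm_smul]
    have h1 : ‖((-1 : ℝ) ^ (m / 2)) / (m.factorial : ℝ)‖ = 1 / (m.factorial : ℝ) := by
      rw [norm_div, norm_pow, norm_neg, norm_one, one_pow, Real.norm_natCast]
    have hfac : (0 : ℝ) < m.factorial := by exact_mod_cast m.factorial_pos
    rw [h1]
    calc 1 / (m.factorial : ℝ) * ‖A ^ (m - 1)‖ * m.factorial = ‖A ^ (m - 1)‖ := by field_simp
      _ ≤ D ^ (m - 1) := matrix_pow_norm_le A _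
      _ ≤ D ^ m := pow_le_pow_right₀ hD1 (Nat.sub_le m 1)
      _ = 1 * D ^ m := (one_mul _).symm
  · rw [sinCoeff, if_neg hm]
    simp only [norm_zero, zero_mul]
    positivity

noncomputable def phiMat {n : ℕ} (A : Matrix (Fin n) (Fin n) ℝ) (z : ℝ) :
    Matrix (Fin n) (Fin n) ℝ :=
  ∑' k : ℕ, (((-1 : ℝ) ^ k * z ^ (2 * k + 1)) / ((2 * k + 1).factorial : ℝ)) • A ^ (2 * k)

lemma phiMat_eq_psum {n : ℕ} (A : Matrix (Fin n) (Fin n) ℝ) :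
    phiMat A = psum (sinCoeff A) := by
  haveI : CompleteSpace (Matrix (Fin n) (Fin n) ℝ) := FiniteDimensional.complete ℝ _
  funext z
  rw [phiMat, psum]
  have hinj : Function.Injective (fun k : ℕ => 2 * k + 1) := fun a b h => by
    simp only at h; omega
  have hsupp : Function.support (fun m => z ^ m • sinCoeff A m)
      ⊆ Set.range (fun k : ℕ => 2 * k + 1) := by
    intro m hm
    rcases Nat.even_or_odd m with he | ho
    · exfalso
      apply hm
      show z ^ m • sinCoeff A m = 0
      rw [sinCoeff, if_neg (by simpa [Nat.not_odd_iff_even] using he), smul_zero]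
    · obtain ⟨k, hk⟩ := ho
      exact ⟨k, hk.symm⟩
  calc ∑' k : ℕ, (((-1 : ℝ) ^ k * z ^ (2 * k + 1)) / ((2 * k + 1).factorial : ℝ)) • A ^ (2 * k)
      = ∑' k : ℕ, (fun m => z ^ m • sinCoeff A m) (2 * k + 1) := by
        refine tsum_congr fun k => ?_
        have hodd : Odd (2 * k + 1) := ⟨k, rfl⟩
        have h2 : (2 * k + 1) / 2 = k := by omega
        have h3 : (2 * k + 1) - 1 = 2 * k := by omega
        simp only [sinCoeff, if_pos hodd, h2, h3, smul_smul]
        congr 1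
        ring
    _ = ∑' m : ℕ, z ^ m • sinCoeff A m := hinj.tsum_eq hsupp

theorem phiMat_initial_value_problem (n : ℕ) (A : Matrix (Fin n) (Fin n) ℝ) :
    phiMat A 0 = 0 ∧ Differentiable ℝ (phiMat A) ∧ deriv (phiMat A) 0 = 1 ∧
      ∀ z : ℝ, deriv (deriv (phiMat A)) z = -((A * A) * phiMat A z) := by
  haveI : CompleteSpace (Matrix (Fin n) (Fin n) ℝ) := FiniteDimensional.complete ℝ _
  have hgood := goodCoeff_sinCoeff A
  have hphi := phiMat_eq_psum A
  refine ⟨?_, ?_, ?_, ?_⟩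
  · rw [hphi, psum]
    rw [tsum_eq_single 0 (fun m hm => by rw [zero_pow hm, zero_smul])]
    simp [sinCoeff]
  · rw [hphi]
    exact diff_psum hgood
  · rw [hphi]; erw [deriv_psum hgood]; rw [psum]
    rw [tsum_eq_single 0 (fun m hm => by rw [zero_pow hm, zero_smul])]
    simp [shiftCoeff, sinCoeff]
  · intro z
    rw [hphi]; erw [deriv_psum hgood, deriv_psum (goodCoeff_shift hgood)]
    -- termwise identity
    have hterm : ∀ m, shiftCoeff (shiftCoeff (sinCoeff A)) m = -(A * A) * sinCoeff A m := by
      intro m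
      rcases Nat.even_or_odd m with he | ho
      · have h1 : ¬ Odd m := by simpa [Nat.not_odd_iff_even] using he
        have h2 : ¬ Odd (m + 1 + 1) := by
          rw [Nat.odd_iff] at h1 ⊢
          omega
        have hz1 : sinCoeff A m = 0 := by rw [sinCoeff, if_neg h1]
        have hz2 : sinCoeff A (m + 1 + 1) = 0 := by rw [sinCoeff, if_neg h2]
        rw [shiftCoeff, shiftCoeff, hz1, hz2, smul_zero, smul_zero, mul_zero]
      · obtain ⟨k, hk⟩ := ho
        subst hk
        have ho1 : Odd (2 * k + 1) := ⟨k, rfl⟩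
        have ho2 : Odd (2 * k + 1 + 1 + 1) := ⟨k + 1, by ring⟩
        have e1 : (2 * k + 1 + 1 + 1) / 2 = k + 1 := by omega
        have e2 : 2 * k + 1 + 1 + 1 - 1 = 2 * k + 2 := by omega
        have e3 : (2 * k + 1) / 2 = k := by omega
        have e4 : 2 * k + 1 - 1 = 2 * k := by omega
        simp only [shiftCoeff, sinCoeff, if_pos ho1, if_pos ho2, e1, e2, e3, e4]
        rw [mul_smul_comm, neg_mul, ← pow_two, ← pow_add]
        rw [← Nat.cast_smul_eq_nsmul ℝ, ← Nat.cast_smul_eq_nsmul ℝ]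
        simp only [smul_smul, smul_neg]
        rw [show 2 + 2 * k = 2 * k + 2 by ring]
        rw [← neg_smul]
        congr 1
        have hfac : ((2 * k + 1 + 1 + 1).factorial : ℝ)
            = (2 * k + 3) * ((2 * k + 2) * ((2 * k + 1).factorial : ℝ)) := by
          rw [Nat.factorial_succ, Nat.factorial_succ]
          push_cast
          ring
        have hne : ((2 * k + 1).factorial : ℝ) ≠ 0 := by
          exact_mod_cast (2 * k + 1).factorial_ne_zero
        rw [hfac, pow_succ]
        push_cast
        field_simp
        ring
    have hsum0 := hasSum_psum hgood z
    have hL : ∀ (x : Matrix (Fin n) (Fin n) ℝ) (s : ℝ) (y : Matrix (Fin n) (Fin n) ℝ),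
        -(A * A) * (s • y) = s • (-(A * A) * y) := fun x s y => (mul_smul_comm s _ y)
    calc psum (shiftCoeff (shiftCoeff (sinCoeff A))) z
        = ∑' m : ℕ, z ^ m • (-(A * A) * sinCoeff A m) := tsum_congr fun m => by rw [hterm m]
      _ = ∑' m : ℕ, -(A * A) * (z ^ m • sinCoeff A m) :=
          tsum_congr fun m => (mul_smul_comm _ _ _).symm
      _ = -(A * A) * psum (sinCoeff A) z := by
          have hh := (LinearMap.toContinuousLinearMap
            (LinearMap.mulLeft ℝ (-(A * A)))).hasSum hsum0
          have ht := hh.tsum_eq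
          simpa [LinearMap.mulLeft_apply] using ht
      _ = -((A * A) * psum (sinCoeff A) z) := by rw [neg_mul]
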